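/- For every separable state σ on ℂ² ⊗ ℂ², Tr((X⊗X + Y⊗Y + Z⊗Z) σ) ≥ −1. Equivalently, ⟨ψ⁻|σ|ψ⁻⟩ ≤ 1/2 and Tr(M σ) ≤ 2/3 for the operator M = (I₄ + 2|ψ⁻⟩⟨ψ⁻|)/3; that is, a separable two-qubit state passes the test 'measure the same uniformly random Pauli observable P ∈ {X,Y,Z} on each qubit and accept iff the two outcomes differ' with probability at most 2/3, whereas the singlet passes it with probability 1. -/

import Mathlib

open scoped Kronecker ComplexOrder
open Matrix

/-- The trace norm (Schatten 1-norm) of a complex matrix: `Tr √(Xᴴ X)`. -/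
noncomputable def traceNorm {n : Type*} [Fintype n] [DecidableEq n] (X : Matrix n n ℂ) : ℝ :=
  (((Matrix.posSemidef_conjTranspose_mul_self X).1.eigenvectorUnitary.1 *
      diagonal (fun i => ((Real.sqrt ((Matrix.posSemidef_conjTranspose_mul_self X).1.eigenvalues i) : ℝ) : ℂ)) *
      (star (Matrix.posSemidef_conjTranspose_mul_self X).1.eigenvectorUnitary : Matrix n n ℂ)).trace).re

/-- A quantum state: a positive semidefinite matrix with unit trace. -/
def IsState {n : Type*} [Fintype n] (ρ : Matrix n n ℂ) : Prop :=
  ρ.PosSemidef ∧ ρ.trace = 1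

/-- The outer product `|v⟩⟨v|`. -/
def outer {n : Type*} (v : n → ℂ) : Matrix n n ℂ :=
  Matrix.of fun i j => v i * star (v j)

/-- A unit vector. -/
def IsUnitVec {n : Type*} [Fintype n] (v : n → ℂ) : Prop :=
  ∑ i, star (v i) * v i = 1

/-- A bipartite separable state: a finite convex combination of tensor products of states. -/
def SeparableState {a b : Type*} [Fintype a] [Fintype b]
    (σ : Matrix (a × b) (a × b) ℂ) : Prop :=
  ∃ (m : ℕ) (p : Fin m → ℝ) (σA : Fin m → Matrix a a ℂ) (σB : Fin m → Matrix b b ℂ),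
    (∀ y, 0 ≤ p y) ∧ (∑ y, p y = 1) ∧ (∀ y, IsState (σA y)) ∧ (∀ y, IsState (σB y)) ∧
    σ = ∑ y, (p y : ℂ) • (σA y ⊗ₖ σB y)

/-- A maximally entangled unit vector `(1/√d) Σ_k |e_k⟩ ⊗ |f_k⟩` built from two
orthonormal bases `e`, `f` of `ℂ^d`. -/
def MaxEntangled {d : ℕ} (φ : Fin d × Fin d → ℂ) : Prop :=
  ∃ e f : Fin d → Fin d → ℂ,
    (∀ i j, ∑ x, star (e i x) * e j x = if i = j then (1 : ℂ) else 0) ∧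
    (∀ i j, ∑ x, star (f i x) * f j x = if i = j then (1 : ℂ) else 0) ∧
    ∀ x, φ x = ((Real.sqrt d : ℂ))⁻¹ * ∑ k, e k x.1 * f k x.2

/-- The singlet `|ψ⁻⟩ = (|0⟩⊗|1⟩ − |1⟩⊗|0⟩)/√2` in `ℂ² ⊗ ℂ²`. -/
noncomputable def singlet : Fin 2 × Fin 2 → ℂ := fun x =>
  if x = ((0 : Fin 2), (1 : Fin 2)) then ((Real.sqrt 2 : ℂ))⁻¹
  else if x = ((1 : Fin 2), (0 : Fin 2)) then -((Real.sqrt 2 : ℂ))⁻¹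
  else 0

/-- Pauli `X`. -/
def pauliX : Matrix (Fin 2) (Fin 2) ℂ := !![0, 1; 1, 0]

/-- Pauli `Z`. -/
def pauliZ : Matrix (Fin 2) (Fin 2) ℂ := !![1, 0; 0, -1]

/-- Pauli `Y = iXZ`. -/
noncomputable def pauliY : Matrix (Fin 2) (Fin 2) ℂ := Complex.I • (pauliX * pauliZ)

/-- The test operator `M = (I₄ + 2|ψ⁻⟩⟨ψ⁻|)/3`, the acceptance operator of the test
"measure the same uniformly random Pauli observable on each qubit and accept iff the
outcomes differ". -/
noncomputable def pauliTestOp : Matrix (Fin 2 × Fin 2) (Fin 2 × Fin 2) ℂ :=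
  ((3 : ℂ))⁻¹ • ((1 : Matrix (Fin 2 × Fin 2) (Fin 2 × Fin 2) ℂ) + (2 : ℂ) • outer singlet)

lemma trace_nonneg_of_psd {n : Type*} [Fintype n] [DecidableEq n] {M : Matrix n n ℂ}
    (hM : M.PosSemidef) : 0 ≤ M.trace := by
  rw [Matrix.trace]
  refine Finset.sum_nonneg fun i _ => ?_
  exact hM.diag_nonneg

lemma trace_mul_nonneg {n : Type*} [Fintype n] [DecidableEq n] {A B : Matrix n n ℂ}
    (hA : A.PosSemidef) (hB : B.PosSemidef) : 0 ≤ (A * B).trace := by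
  obtain ⟨C, rfl⟩ : ∃ C : Matrix n n ℂ, A = Cᴴ * C := by
    open scoped MatrixOrder in
    obtain ⟨B, rfl⟩ := CStarAlgebra.nonneg_iff_eq_star_mul_self.mp hA.nonneg
    exact ⟨B, rfl⟩
  rw [Matrix.mul_assoc, Matrix.trace_mul_comm]
  simpa [Matrix.mul_assoc] using trace_nonneg_of_psd (hB.mul_mul_conjTranspose_same C)

lemma trace_outer_mul {n : Type*} [Fintype n] (v : n → ℂ) (σ : Matrix n n ℂ) :
    (outer v * σ).trace = star v ⬝ᵥ σ *ᵥ v := by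
  simp only [Matrix.trace, Matrix.diag, Matrix.mul_apply, outer, Matrix.of_apply,
    dotProduct, Matrix.mulVec, Pi.star_apply, Finset.mul_sum]
  rw [Finset.sum_comm]
  exact Finset.sum_congr rfl fun j _ => Finset.sum_congr rfl fun i _ => by ring

lemma hc2 : ((Real.sqrt 2 : ℂ))⁻¹ * ((Real.sqrt 2 : ℂ))⁻¹ = 2⁻¹ := by
  rw [← mul_inv, ← Complex.ofReal_mul, Real.mul_self_sqrt (by norm_num)]; norm_num

lemma singlet_form (A B : Matrix (Fin 2) (Fin 2) ℂ) (hA : A.trace = 1) (hB : B.trace = 1) :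
    star singlet ⬝ᵥ (A ⊗ₖ B) *ᵥ singlet = 2⁻¹ * (1 - (A * B).trace) := by
  have hA' : A 0 0 + A 1 1 = 1 := by simpa [Matrix.trace, Fin.sum_univ_two] using hA
  have hB' : B 0 0 + B 1 1 = 1 := by simpa [Matrix.trace, Fin.sum_univ_two] using hB
  simp only [dotProduct, Matrix.mulVec, Fintype.sum_prod_type, Fin.sum_univ_two,
    singlet, Matrix.kroneckerMap_apply, Matrix.trace, Matrix.diag, Matrix.mul_apply,
    Pi.star_apply, Prod.mk.injEq, if_true, if_false]
  simp only [Prod.ext_iff, Fin.isValue, show ((0:Fin 2) = 1) = False by simp,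
    show ((1:Fin 2) = 0) = False by simp, and_true, true_and, and_false, false_and,
    if_true, if_false, eq_self_iff_true, star_zero, star_neg, Complex.star_def,
    map_inv₀, Complex.conj_ofReal]
  ring_nf
  linear_combination (A 0 0 * B 1 1 - A 0 1 * B 1 0 - A 1 0 * B 0 1 + A 1 1 * B 0 0) * hc2 +
    (2⁻¹ * (B 0 0 + B 1 1)) * hA' + 2⁻¹ * hB'

lemma pauli_identity :
    pauliX ⊗ₖ pauliX + pauliY ⊗ₖ pauliY + pauliZ ⊗ₖ pauliZ
      = 1 - (4 : ℂ) • outer singlet := by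
  ext ⟨i, j⟩ ⟨k, l⟩
  fin_cases i <;> fin_cases j <;> fin_cases k <;> fin_cases l <;>
    simp [pauliX, pauliY, pauliZ, outer, singlet, Matrix.one_apply, Complex.star_def,
      map_inv₀, Complex.conj_ofReal, Matrix.kroneckerMap_apply, Prod.ext_iff] <;>
    (ring_nf; rw [inv_pow, show ((Real.sqrt 2 : ℝ) : ℂ) ^ 2 = 2 by
        rw [← Complex.ofReal_pow, Real.sq_sqrt (by norm_num)]; norm_num]; norm_num)

lemma outer_mul_outer {n : Type*} [Fintype n] (v : n → ℂ) :
    outer v * outer v = (star v ⬝ᵥ v) • outer v := by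
  ext i j
  simp only [Matrix.mul_apply, outer, Matrix.of_apply, Matrix.smul_apply,
    dotProduct, Pi.star_apply, smul_eq_mul, Finset.sum_mul, Finset.mul_sum]
  exact Finset.sum_congr rfl fun k _ => by ring

lemma key_bound (σ : Matrix (Fin 2 × Fin 2) (Fin 2 × Fin 2) ℂ)
    (hsep : SeparableState σ) :
    (outer singlet * σ).trace ≤ ((2 : ℂ))⁻¹ := by
  obtain ⟨m, p, σA, σB, hp, hps, hA, hB, rfl⟩ := hsep
  rw [Matrix.mul_sum, Matrix.trace_sum]
  have hterm : ∀ y, (outer singlet * ((p y : ℂ) • (σA y ⊗ₖ σB y))).trace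
      = (p y : ℂ) * (2⁻¹ * (1 - (σA y * σB y).trace)) := by
    intro y
    rw [Matrix.mul_smul, Matrix.trace_smul, trace_outer_mul,
      singlet_form _ _ (hA y).2 (hB y).2, smul_eq_mul]
  calc ∑ y, (outer singlet * ((p y : ℂ) • (σA y ⊗ₖ σB y))).trace
      ≤ ∑ y, (p y : ℂ) * 2⁻¹ := by
        refine Finset.sum_le_sum fun y _ => ?_
        rw [hterm y]
        refine mul_le_mul_of_nonneg_left ?_ (Complex.zero_le_real.mpr (hp y))
        have h0 := trace_mul_nonneg (hA y).1 (hB y).1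
        calc 2⁻¹ * (1 - (σA y * σB y).trace) ≤ 2⁻¹ * 1 := by
              refine mul_le_mul_of_nonneg_left ?_ (by norm_num [Complex.le_def])
              simpa using sub_le_sub_left h0 1
          _ = 2⁻¹ := mul_one _
    _ = 2⁻¹ := by
        rw [← Finset.sum_mul]
        have hs : (∑ y, (p y : ℂ)) = 1 := by exact_mod_cast hps
        rw [hs, one_mul]

/-- Every separable two-qubit state `σ` satisfies
`Tr((X⊗X + Y⊗Y + Z⊗Z)σ) ≥ −1`; equivalently `⟨ψ⁻|σ|ψ⁻⟩ ≤ 1/2` and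
`Tr(Mσ) ≤ 2/3` where `M = (I₄ + 2|ψ⁻⟩⟨ψ⁻|)/3`, whereas the singlet
passes the Pauli test with probability `1`: `Tr(M|ψ⁻⟩⟨ψ⁻|) = 1`. -/
theorem stmt3 :
    (∀ σ : Matrix (Fin 2 × Fin 2) (Fin 2 × Fin 2) ℂ, IsState σ → SeparableState σ →
      (-1 : ℂ) ≤ ((pauliX ⊗ₖ pauliX + pauliY ⊗ₖ pauliY + pauliZ ⊗ₖ pauliZ) * σ).trace ∧
      star singlet ⬝ᵥ σ *ᵥ singlet ≤ ((2 : ℂ))⁻¹ ∧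
      (pauliTestOp * σ).trace ≤ (2 / 3 : ℂ)) ∧
    (pauliTestOp * outer singlet).trace = 1 := by
  constructor
  · intro σ hσ hsep
    have ht : (outer singlet * σ).trace ≤ ((2 : ℂ))⁻¹ := key_bound σ hsep
    refine ⟨?_, ?_, ?_⟩
    · rw [pauli_identity, Matrix.sub_mul, Matrix.trace_sub, Matrix.one_mul,
        Matrix.smul_mul, Matrix.trace_smul, hσ.2, smul_eq_mul]
      have h4 : (4 : ℂ) * (outer singlet * σ).trace ≤ 4 * 2⁻¹ :=
        mul_le_mul_of_nonneg_left ht (by norm_num [Complex.le_def])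
      calc (-1 : ℂ) = 1 - 4 * 2⁻¹ := by norm_num
        _ ≤ 1 - 4 * (outer singlet * σ).trace := sub_le_sub_left h4 1
    · rw [← trace_outer_mul]; exact ht
    · rw [pauliTestOp, Matrix.smul_mul, Matrix.trace_smul, Matrix.add_mul,
        Matrix.trace_add, Matrix.one_mul, Matrix.smul_mul, Matrix.trace_smul, hσ.2,
        smul_eq_mul, smul_eq_mul]
      have h2 : (2 : ℂ) * (outer singlet * σ).trace ≤ 2 * 2⁻¹ :=
        mul_le_mul_of_nonneg_left ht (by norm_num [Complex.le_def])
      calc (3 : ℂ)⁻¹ * (1 + 2 * (outer singlet * σ).trace)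
          ≤ 3⁻¹ * (1 + 2 * 2⁻¹) := by
            refine mul_le_mul_of_nonneg_left ?_ (by norm_num [Complex.le_def])
            exact add_le_add_right h2 1
        _ = 2 / 3 := by norm_num
  · rw [pauliTestOp, Matrix.smul_mul, Matrix.trace_smul, Matrix.add_mul,
      Matrix.trace_add, Matrix.one_mul, Matrix.smul_mul, Matrix.trace_smul,
      smul_eq_mul, smul_eq_mul]
    have h1 : (outer singlet).trace = 1 := by
      simp only [outer, Matrix.trace, Matrix.diag, Matrix.of_apply, Fintype.sum_prod_type,
        Fin.sum_univ_two, singlet, Complex.star_def, map_inv₀, Complex.conj_ofReal]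
      simp only [Prod.mk.injEq, if_true, if_false]
      norm_num
      linear_combination (2 : ℂ) * hc2
    have hν : star singlet ⬝ᵥ singlet = 1 := by
      simp only [dotProduct, Fintype.sum_prod_type, Fin.sum_univ_two, singlet,
        Pi.star_apply, Complex.star_def, map_inv₀, Complex.conj_ofReal]
      norm_num [Prod.ext_iff]
      linear_combination (2 : ℂ) * hc2
    have h2 : outer singlet * outer singlet = (1 : ℂ) • outer singlet := by
      rw [outer_mul_outer, hν]
    rw [h2, Matrix.trace_smul, h1, smul_eq_mul]
    norm_num
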